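/- Let α, β be complex numbers with |α|² + |β|² = 1, and define sequences (αₙ), (βₙ), (bₙ) by α₀ = α, β₀ = β, and for n ≥ 1: αₙ = α_{n−1}/√(9 − 8|α_{n−1}|²), βₙ = 3β_{n−1}/√(9 − 8|α_{n−1}|²), and bₙ = 1 − 8|α_{n−1}|²/9. Then for every n ≥ 0: |αₙ|² = |α|² / ((1 − |α|²)·9ⁿ + |α|²), and for every n ≥ 1 the product b₁·b₂·⋯·bₙ equals |β|² + |α|²/9ⁿ. In particular, ∏_{i=1}^{n} bᵢ → |β|² and |αₙ|² → 0 (when |α| < 1) as n → ∞. -/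

import Mathlib

open Filter Finset

/-- Quantitative content of the σₓ-measurement lemma: the closed forms for
|αₙ|² and for the running product b₁⋯bₙ, and their limits. -/
theorem stmt18 (α β : ℂ) (hnorm : ‖α‖ ^ 2 + ‖β‖ ^ 2 = 1)
    (a b : ℕ → ℂ) (c : ℕ → ℝ)
    (ha0 : a 0 = α) (hb0 : b 0 = β)
    (ha : ∀ n, a (n + 1) = a n / (Real.sqrt (9 - 8 * ‖a n‖ ^ 2) : ℂ))
    (hb : ∀ n, b (n + 1) = 3 * b n / (Real.sqrt (9 - 8 * ‖a n‖ ^ 2) : ℂ))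
    (hc : ∀ n, c (n + 1) = 1 - 8 * ‖a n‖ ^ 2 / 9) :
    (∀ n : ℕ, ‖a n‖ ^ 2 =
        ‖α‖ ^ 2 /
          ((1 - ‖α‖ ^ 2) * 9 ^ n + ‖α‖ ^ 2)) ∧
    (∀ n : ℕ, 1 ≤ n →
        ∏ i ∈ Finset.Icc 1 n, c i =
          ‖β‖ ^ 2 + ‖α‖ ^ 2 / 9 ^ n) ∧
    Tendsto (fun n : ℕ => ∏ i ∈ Finset.Icc 1 n, c i) atTop
      (nhds (‖β‖ ^ 2)) ∧
    (‖α‖ < 1 →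
      Tendsto (fun n : ℕ => ‖a n‖ ^ 2) atTop (nhds 0)) := by
  set A := ‖α‖ ^ 2 with hAdef
  have hA0 : 0 ≤ A := sq_nonneg _
  have hA1 : A ≤ 1 := by nlinarith [sq_nonneg (‖β‖)]
  set D : ℕ → ℝ := fun n => (1 - A) * 9 ^ n + A with hDdef
  have hD1 : ∀ n, 1 ≤ D n := by
    intro n
    have h9 : (1 : ℝ) ≤ 9 ^ n := one_le_pow₀ (by norm_num)
    simp only [hDdef]
    nlinarith
  have hDpos : ∀ n, 0 < D n := fun n => lt_of_lt_of_le one_pos (hD1 n)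
  -- main inductive closed form
  have key : ∀ n, ‖a n‖ ^ 2 = A / D n := by
    intro n
    induction n with
    | zero => simp [hDdef, ha0, hAdef]
    | succ n ih =>
      have hle : A / D n ≤ 1 := by
        rw [div_le_one (hDpos n)]
        have := hD1 n
        nlinarith
      have hpos : 0 < 9 - 8 * ‖a n‖ ^ 2 := by
        rw [ih]; nlinarith [hA0, hDpos n]
      have hsq : (Real.sqrt (9 - 8 * ‖a n‖ ^ 2)) ^ 2
          = 9 - 8 * ‖a n‖ ^ 2 := Real.sq_sqrt hpos.le
      rw [ha n, norm_div, Complex.norm_real, Real.norm_eq_abs,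
        abs_of_nonneg (Real.sqrt_nonneg _), div_pow, hsq, ih]
      have hDs : D (n + 1) = 9 * D n - 8 * A := by
        simp only [hDdef, pow_succ]; ring
      have hD9 : 9 - 8 * (A / D n) = D (n + 1) / D n := by
        rw [eq_div_iff (hDpos n).ne', hDs, sub_mul, mul_assoc,
          div_mul_cancel₀ _ (hDpos n).ne']
      rw [hD9]
      rw [div_div_div_eq]
      rw [mul_comm (D n), mul_div_mul_right _ _ (hDpos n).ne']
  -- product closed form
  have prod_eq : ∀ n : ℕ, 1 ≤ n →
      ∏ i ∈ Finset.Icc 1 n, c i = ‖β‖ ^ 2 + A / 9 ^ n := by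
    have hB : ‖β‖ ^ 2 = 1 - A := by linarith
    have cform : ∀ n : ℕ, c (n + 1) = D (n + 1) / (9 * D n) := by
      intro n
      rw [hc n, key n]
      have hDn := (hDpos n).ne'
      field_simp
      simp only [hDdef, pow_succ]
      ring
    intro n hn
    induction n with
    | zero => omega
    | succ n ih =>
      rcases Nat.eq_zero_or_pos n with h0 | h0
      · subst h0
        simp [cform 0, hB, hDdef]
        ring
      · rw [Finset.prod_Icc_succ_top (by omega), ih h0, cform n, hB]
        have hDn := (hDpos n).ne'
        have h9n : (9 : ℝ) ^ n ≠ 0 := by positivity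
        field_simp
        simp only [hDdef, pow_succ]
        ring
  refine ⟨key, prod_eq, ?_, ?_⟩
  · -- limit of the product
    have h1 : Tendsto (fun n : ℕ => ‖β‖ ^ 2 + A / 9 ^ n) atTop
        (nhds (‖β‖ ^ 2)) := by
      have : Tendsto (fun n : ℕ => A / 9 ^ n) atTop (nhds 0) := by
        simp_rw [div_eq_mul_inv, ← inv_pow]
        rw [show (0:ℝ) = A * 0 by ring]
        exact (tendsto_pow_atTop_nhds_zero_of_lt_one (by norm_num)
          (by norm_num)).const_mul A
      simpa using (tendsto_const_nhds.add this)
    refine h1.congr' ?_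
    filter_upwards [eventually_ge_atTop 1] with n hn
    exact (prod_eq n hn).symm
  · -- limit of |aₙ|²
    intro hα
    have hAlt : A < 1 := by
      have : ‖α‖ ^ 2 < 1 := by nlinarith [norm_nonneg α]
      exact this
    have hDtop : Tendsto D atTop atTop := by
      have h9 : Tendsto (fun n : ℕ => (9 : ℝ) ^ n) atTop atTop :=
        tendsto_pow_atTop_atTop_of_one_lt (by norm_num)
      have := (h9.const_mul_atTop (by linarith : (0:ℝ) < 1 - A)).atTop_add
        (tendsto_const_nhds (x := A))
      simpa [hDdef] using this
    have := Tendsto.div_atTop (tendsto_const_nhds (x := A)) hDtop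
    refine this.congr ?_
    intro n
    exact (key n).symm
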